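/- For any nonempty periodic point set S = Λ + M in ℝ^n, the infimum in the definition of the bridge length is attained: β(S) itself bridges S, i.e. for any p, q ∈ S there is a finite sequence p = p_1, …, p_k = q of points of S with |p_i − p_{i+1}| ≤ β(S) for all i. -/

import Mathlib

noncomputable section

/-- `δ` bridges `S`: any two points of `S` are joined by a finite sequence of points of `S`
with consecutive distances at most `δ`. -/
def Bridges {n : ℕ} (δ : ℝ) (S : Set (EuclideanSpace ℝ (Fin n))) : Prop :=
  ∀ p ∈ S, ∀ q ∈ S, ∃ k : ℕ, ∃ f : Fin (k + 1) → EuclideanSpace ℝ (Fin n),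
    f 0 = p ∧ f (Fin.last k) = q ∧ (∀ i, f i ∈ S) ∧
    ∀ i : Fin k, dist (f i.castSucc) (f i.succ) ≤ δ

/-- The bridge length β(S): the infimum of all δ ≥ 0 that bridge S. -/
def bridgeLength {n : ℕ} (S : Set (EuclideanSpace ℝ (Fin n))) : ℝ :=
  sInf {δ : ℝ | 0 ≤ δ ∧ Bridges δ S}

/-- The lattice Λ generated by the basis `b`: the ℤ-span of the basis vectors. -/
def lat {n : ℕ} (b : Module.Basis (Fin n) ℝ (EuclideanSpace ℝ (Fin n))) :
    Submodule ℤ (EuclideanSpace ℝ (Fin n)) :=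
  Submodule.span ℤ (Set.range (b : Fin n → EuclideanSpace ℝ (Fin n)))

/-- The unit cell U of the basis `b`. -/
def unitCell {n : ℕ} (b : Module.Basis (Fin n) ℝ (EuclideanSpace ℝ (Fin n))) :
    Set (EuclideanSpace ℝ (Fin n)) :=
  {x | ∀ i, 0 ≤ b.repr x i ∧ b.repr x i < 1}

/-- The periodic point set S = Λ + M. -/
def periodicSet {n : ℕ} (b : Module.Basis (Fin n) ℝ (EuclideanSpace ℝ (Fin n)))
    (M : Set (EuclideanSpace ℝ (Fin n))) : Set (EuclideanSpace ℝ (Fin n)) :=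
  {x | ∃ l ∈ (lat b : Set (EuclideanSpace ℝ (Fin n))), ∃ p ∈ M, x = l + p}

/-! ### Auxiliary lemmas -/

namespace BridgeAux

variable {n : ℕ}

/-- The periodic set is invariant under translation by lattice vectors. -/
lemma add_mem_periodicSet (b : Module.Basis (Fin n) ℝ (EuclideanSpace ℝ (Fin n)))
    {M : Set (EuclideanSpace ℝ (Fin n))} {l s : EuclideanSpace ℝ (Fin n)}
    (hl : l ∈ lat b) (hs : s ∈ periodicSet b M) : l + s ∈ periodicSet b M := by
  obtain ⟨l0, hl0, m, hm, rfl⟩ := hs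
  exact ⟨l + l0, (lat b).add_mem hl hl0, m, hm, (add_assoc l l0 m).symm⟩

/-- Turn a `ReflTransGen` chain into a finite path as in `Bridges`. -/
lemma path_of_reflTransGen {δ : ℝ} {S : Set (EuclideanSpace ℝ (Fin n))}
    {p q : EuclideanSpace ℝ (Fin n)}
    (h : Relation.ReflTransGen (fun x y => x ∈ S ∧ y ∈ S ∧ dist x y ≤ δ) p q)
    (hp : p ∈ S) :
    ∃ k : ℕ, ∃ f : Fin (k + 1) → EuclideanSpace ℝ (Fin n),
      f 0 = p ∧ f (Fin.last k) = q ∧ (∀ i, f i ∈ S) ∧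
      ∀ i : Fin k, dist (f i.castSucc) (f i.succ) ≤ δ := by
  induction h with
  | refl => exact ⟨0, fun _ => p, rfl, rfl, fun _ => hp, fun i => i.elim0⟩
  | @tail b c hab hbc ih =>
    obtain ⟨k, f, hf0, hfl, hfS, hfd⟩ := ih
    refine ⟨k + 1, Fin.snoc f c, ?_, ?_, ?_, ?_⟩
    · rw [show (0 : Fin (k + 2)) = Fin.castSucc 0 by rfl, Fin.snoc_castSucc, hf0]
    · rw [Fin.snoc_last]
    · intro i
      refine Fin.lastCases ?_ (fun j => ?_) i
      · rw [Fin.snoc_last]; exact hbc.2.1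
      · rw [Fin.snoc_castSucc]; exact hfS j
    · intro i
      refine Fin.lastCases ?_ (fun j => ?_) i
      · rw [Fin.succ_last, Fin.snoc_last, Fin.snoc_castSucc, hfl]
        exact hbc.2.2
      · rw [Fin.succ_castSucc, Fin.snoc_castSucc, Fin.snoc_castSucc]
        exact hfd j

/-- Walking by a lattice vector within the periodic set. -/
lemma reach_lat_add (b : Module.Basis (Fin n) ℝ (EuclideanSpace ℝ (Fin n)))
    (M : Set (EuclideanSpace ℝ (Fin n))) {δ : ℝ} (hδ : ∀ i, ‖b i‖ ≤ δ)
    {l : EuclideanSpace ℝ (Fin n)} (hl : l ∈ lat b) :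
    ∀ s ∈ periodicSet b M,
      Relation.ReflTransGen
        (fun x y => x ∈ periodicSet b M ∧ y ∈ periodicSet b M ∧ dist x y ≤ δ)
        s (l + s) := by
  set S := periodicSet b M
  set R : EuclideanSpace ℝ (Fin n) → EuclideanSpace ℝ (Fin n) → Prop :=
    fun x y => x ∈ S ∧ y ∈ S ∧ dist x y ≤ δ with hR
  have hsymm : Symmetric R := by
    intro x y ⟨h1, h2, h3⟩
    exact ⟨h2, h1, by rwa [dist_comm]⟩
  have hRTsymm : Symmetric (Relation.ReflTransGen R) :=
    by haveI : Std.Symm R := ⟨fun x y h => hsymm h⟩; exact fun x y h => Std.Symm.symm x y h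
  -- property to prove by span induction
  have key : ∀ l, l ∈ lat b → ∀ s ∈ S, Relation.ReflTransGen R s (l + s) := by
    intro l hl
    induction hl using Submodule.span_induction with
    | mem x hx =>
      obtain ⟨i, rfl⟩ := hx
      intro s hs
      refine Relation.ReflTransGen.single ⟨hs, add_mem_periodicSet b (Submodule.subset_span ⟨i, rfl⟩) hs, ?_⟩
      have : s - (b i + s) = -(b i) := by abel
      rw [dist_eq_norm, this, norm_neg]
      exact hδ i
    | zero => intro s hs; rw [zero_add]
    | add x y hx hy ihx ihy =>
      intro s hs
      have h1 := ihx s hs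
      have h2 := ihy (x + s) (add_mem_periodicSet b hx hs)
      have : x + y + s = y + (x + s) := by abel
      rw [this]
      exact h1.trans h2
    | smul a x hx ih =>
      -- first, the negation step
      have hneg : ∀ y, y ∈ lat b → (∀ s ∈ S, Relation.ReflTransGen R s (y + s)) →
          ∀ s ∈ S, Relation.ReflTransGen R s (-y + s) := by
        intro y hy ihy s hs
        have hs' : -y + s ∈ S := add_mem_periodicSet b ((lat b).neg_mem hy) hs
        have h1 := ihy (-y + s) hs'
        have : y + (-y + s) = s := by abel
        rw [this] at h1
        exact hRTsymm h1
      induction a using Int.induction_on with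
      | zero => intro s hs; rw [zero_smul, zero_add]
      | succ k ihk =>
        intro s hs
        have h1 := ihk s hs
        have h2 := ih ((k : ℤ) • x + s)
          (add_mem_periodicSet b ((lat b).smul_mem (k : ℤ) hx) hs)
        have : ((k : ℤ) + 1) • x + s = x + ((k : ℤ) • x + s) := by
          rw [add_smul, one_smul]; abel
        rw [this]
        exact h1.trans h2
      | pred k ihk =>
        intro s hs
        have hPnegx := hneg x hx ih
        have h1 := ihk s hs
        have h2 := hPnegx ((-(k : ℤ)) • x + s)
          (add_mem_periodicSet b ((lat b).smul_mem _ hx) hs)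
        have heq : (-(k : ℤ) - 1) • x + s = -x + ((-(k : ℤ)) • x + s) := by
          rw [sub_smul, neg_smul, one_smul]; abel
        rw [heq]
        exact h1.trans h2
  exact key l hl

/-- A lattice intersected with a ball is finite. -/
lemma lat_inter_finite (b : Module.Basis (Fin n) ℝ (EuclideanSpace ℝ (Fin n))) (C : ℝ) :
    {x : EuclideanSpace ℝ (Fin n) | x ∈ lat b ∧ ‖x‖ ≤ C}.Finite := by
  haveI : DiscreteTopology ((lat b : Set (EuclideanSpace ℝ (Fin n)))) := by
    unfold lat
    exact inferInstanceAs (DiscreteTopology (Submodule.span ℤ (Set.range (b : Fin n → EuclideanSpace ℝ (Fin n)))))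
  have hcl : IsClosed ((lat b : Set (EuclideanSpace ℝ (Fin n)))) := by
    haveI : DiscreteTopology ((lat b).toAddSubgroup) :=
      inferInstanceAs (DiscreteTopology ((lat b : Set (EuclideanSpace ℝ (Fin n)))))
    have : IsClosed (((lat b).toAddSubgroup : Set (EuclideanSpace ℝ (Fin n)))) :=
      AddSubgroup.isClosed_of_discrete
    exact this
  have hsub : {x : EuclideanSpace ℝ (Fin n) | x ∈ lat b ∧ ‖x‖ ≤ C}
      ⊆ Metric.closedBall 0 C ∩ (lat b : Set (EuclideanSpace ℝ (Fin n))) := by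
    intro x ⟨h1, h2⟩
    exact ⟨by simpa [Metric.mem_closedBall, dist_eq_norm] using h2, h1⟩
  exact (Metric.finite_isBounded_inter_isClosed DiscreteTopology.isDiscrete Metric.isBounded_closedBall hcl).subset hsub

/-- The set of distances between points of the periodic set, below any bound, is finite. -/
lemma distSet_finite (b : Module.Basis (Fin n) ℝ (EuclideanSpace ℝ (Fin n)))
    {M : Set (EuclideanSpace ℝ (Fin n))} (hMfin : M.Finite) (C : ℝ) :
    {d : ℝ | (∃ p ∈ periodicSet b M, ∃ q ∈ periodicSet b M, dist p q = d) ∧ d ≤ C}.Finite := by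
  obtain ⟨Cm, hCm⟩ := (hMfin.image (fun m => ‖m‖)).bddAbove
  have hCm' : ∀ m ∈ M, ‖m‖ ≤ Cm := fun m hm => hCm ⟨m, hm, rfl⟩
  set L := {x : EuclideanSpace ℝ (Fin n) | x ∈ lat b ∧ ‖x‖ ≤ C + Cm + Cm}
  have hL : L.Finite := lat_inter_finite b _
  have : {d : ℝ | (∃ p ∈ periodicSet b M, ∃ q ∈ periodicSet b M, dist p q = d) ∧ d ≤ C}
      ⊆ (fun x : EuclideanSpace ℝ (Fin n) × EuclideanSpace ℝ (Fin n) ×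
          EuclideanSpace ℝ (Fin n) => ‖x.1 + x.2.1 - x.2.2‖) '' (L ×ˢ M ×ˢ M) := by
    rintro d ⟨⟨p, ⟨l, hl, m, hm, rfl⟩, q, ⟨l', hl', m', hm', rfl⟩, rfl⟩, hdC⟩
    refine ⟨(l - l', m, m'), ⟨?_, hm, hm'⟩, ?_⟩
    · refine ⟨(lat b).sub_mem hl hl', ?_⟩
      have h1 : l - l' = ((l + m) - (l' + m')) - m + m' := by abel
      calc ‖l - l'‖ = ‖((l + m) - (l' + m')) - m + m'‖ := by rw [h1]
        _ ≤ ‖(l + m) - (l' + m')‖ + ‖m‖ + ‖m'‖ := by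
            refine le_trans (norm_add_le _ _) (add_le_add_left (norm_sub_le _ _) _)
        _ ≤ C + Cm + Cm := by
            rw [← dist_eq_norm]
            exact add_le_add (add_le_add hdC (hCm' m hm)) (hCm' m' hm')
    · simp only
      rw [dist_eq_norm]
      congr 1
      abel
  exact ((hL.prod (hMfin.prod hMfin)).image _).subset this

/-- Some nonnegative `δ` bridges the periodic set. -/
lemma exists_bridges (b : Module.Basis (Fin n) ℝ (EuclideanSpace ℝ (Fin n)))
    {M : Set (EuclideanSpace ℝ (Fin n))} (hMfin : M.Finite) (hMne : M.Nonempty) :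
    ∃ δ : ℝ, 0 ≤ δ ∧ Bridges δ (periodicSet b M) := by
  obtain ⟨C1, hC1⟩ := ((hMfin.prod hMfin).image (fun x => dist x.1 x.2)).bddAbove
  obtain ⟨C2, hC2⟩ := (Set.finite_range (fun i : Fin n => ‖b i‖)).bddAbove
  refine ⟨max (max C1 C2) 0, le_max_right _ _, ?_⟩
  set δ := max (max C1 C2) 0
  have hδb : ∀ i, ‖b i‖ ≤ δ := fun i =>
    le_trans (hC2 ⟨i, rfl⟩) (le_trans (le_max_right _ _) (le_max_left _ _))
  have hδM : ∀ m ∈ M, ∀ m' ∈ M, dist m m' ≤ δ := fun m hm m' hm' =>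
    le_trans (hC1 ⟨(m, m'), ⟨hm, hm'⟩, rfl⟩) (le_trans (le_max_left _ _) (le_max_left _ _))
  set S := periodicSet b M
  set R : EuclideanSpace ℝ (Fin n) → EuclideanSpace ℝ (Fin n) → Prop :=
    fun x y => x ∈ S ∧ y ∈ S ∧ dist x y ≤ δ
  rintro p hp q hq
  obtain ⟨l, hl, m, hm, rfl⟩ := hp
  obtain ⟨l', hl', m', hm', rfl⟩ := hq
  have hlm : l + m ∈ S := ⟨l, hl, m, hm, rfl⟩
  have hlm' : l + m' ∈ S := ⟨l, hl, m', hm', rfl⟩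
  have step1 : Relation.ReflTransGen R (l + m) (l + m') :=
    Relation.ReflTransGen.single ⟨hlm, hlm', by rw [dist_add_left]; exact hδM m hm m' hm'⟩
  have step2 : Relation.ReflTransGen R (l + m') (l' + m') := by
    have h := reach_lat_add b M hδb ((lat b).sub_mem hl' hl) (l + m') hlm'
    have : l' - l + (l + m') = l' + m' := by abel
    rwa [this] at h
  exact path_of_reflTransGen (step1.trans step2) hlm

end BridgeAux

/-- For a nonempty periodic point set S = Λ + M, the infimum in the
definition of the bridge length is attained: β(S) itself bridges S. -/
theorem bridgeLength_bridges {n : ℕ}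
    (b : Module.Basis (Fin n) ℝ (EuclideanSpace ℝ (Fin n)))
    (M : Set (EuclideanSpace ℝ (Fin n))) (hMfin : M.Finite) (hMne : M.Nonempty)
    (hMU : M ⊆ unitCell b) :
    Bridges (bridgeLength (periodicSet b M)) (periodicSet b M) := by
  classical
  set S := periodicSet b M with hS
  set T := {δ : ℝ | 0 ≤ δ ∧ Bridges δ S} with hT
  obtain ⟨δ0, hδ0, hbr⟩ := BridgeAux.exists_bridges b hMfin hMne
  have hTne : T.Nonempty := ⟨δ0, hδ0, hbr⟩
  set β := bridgeLength S with hβ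
  have hβdef : β = sInf T := rfl
  have hF : {d : ℝ | (∃ p ∈ S, ∃ q ∈ S, dist p q = d) ∧ d ≤ β + 1}.Finite :=
    BridgeAux.distSet_finite b hMfin (β + 1)
  have hgap : ∃ ε : ℝ, 0 < ε ∧
      ∀ d : ℝ, (∃ p ∈ S, ∃ q ∈ S, dist p q = d) → d ≤ β + ε → d ≤ β := by
    set F := {d : ℝ | ((∃ p ∈ S, ∃ q ∈ S, dist p q = d) ∧ d ≤ β + 1) ∧ β < d} with hFdef
    have hFfin : F.Finite := hF.subset (fun d hd => hd.1)
    by_cases hne : F.Nonempty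
    · have hne' : hFfin.toFinset.Nonempty := by
        simpa [Set.Finite.toFinset_nonempty] using hne
      set μ := hFfin.toFinset.min' hne' with hμ
      have hμF : μ ∈ F := by
        have := hFfin.toFinset.min'_mem hne'
        simpa [Set.Finite.mem_toFinset] using this
      have hμβ : β < μ := hμF.2
      refine ⟨min 1 ((μ - β) / 2), lt_min one_pos (by linarith), ?_⟩
      intro d hd hdle
      by_contra hcon
      push_neg at hcon
      have hdF : d ∈ F := by
        refine ⟨⟨hd, ?_⟩, hcon⟩
        calc d ≤ β + min 1 ((μ - β) / 2) := hdle
          _ ≤ β + 1 := by have := min_le_left 1 ((μ - β) / 2); linarith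
      have hμd : μ ≤ d := hFfin.toFinset.min'_le d (by simpa [Set.Finite.mem_toFinset] using hdF)
      have : d ≤ β + (μ - β) / 2 := by
        have := min_le_right 1 ((μ - β) / 2); linarith
      linarith
    · refine ⟨1, one_pos, ?_⟩
      intro d hd hdle
      by_contra hcon
      push_neg at hcon
      exact hne ⟨d, ⟨hd, hdle⟩, hcon⟩
  obtain ⟨ε, hε0, hgapd⟩ := hgap
  have hlt : sInf T < β + ε := by rw [← hβdef]; linarith
  obtain ⟨δ, hδT, hδlt⟩ := exists_lt_of_csInf_lt hTne hlt
  intro p hp q hq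
  obtain ⟨k, f, h0, hlast, hfS, hfd⟩ := hδT.2 p hp q hq
  exact ⟨k, f, h0, hlast, hfS, fun i =>
    hgapd _ ⟨_, hfS _, _, hfS _, rfl⟩ (le_trans (hfd i) hδlt.le)⟩
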